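/- Let P₊, P₋ be projections in a semifinite von Neumann algebra (N, T) with P₋ − F P₊ F* ∈ K_T for a unitary F ∈ N. Then Ker(P₊F*P₋) ∩ P₋ = (F(1−P₊)F*) ∧ P₋ and Ker(P₋FP₊) ∩ P₊ = F*((1−P₋) ∧ (FP₊F*))F, and consequently the skew-corner index T-Ind_{P₊·P₋}(P₊F*P₋) = T(P₋ ∧ F(1−P₊)F*) − T((1−P₋) ∧ FP₊F*). -/

import Mathlib

/-- Kernel identifications for the skew-corner index: if `P₊, P₋` are projections and
`F` is unitary with `P₋ - F P₊ F*` compact, then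
`Ker(P₊F*P₋) ∩ P₋ = (F(1-P₊)F*) ∧ P₋` and
`Ker(P₋FP₊) ∩ P₊ = F*((1-P₋) ∧ FP₊F*)F`; consequently, for any unitarily invariant
dimension function `τ` on closed subspaces, the skew-corner index satisfies
`T-Ind_{P₊·P₋}(P₊F*P₋) = τ(P₋ ∧ F(1-P₊)F*) - τ((1-P₋) ∧ FP₊F*)`. -/
theorem stmt_16 {E : Type*} [NormedAddCommGroup E] [InnerProductSpace ℂ E]
    [CompleteSpace E]
    (Pp Pm F : E →L[ℂ] E)
    (hPp : IsIdempotentElem Pp) (hPpsa : IsSelfAdjoint Pp)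
    (hPm : IsIdempotentElem Pm) (hPmsa : IsSelfAdjoint Pm)
    (hF : star F * F = 1) (hF' : F * star F = 1)
    (hcpt : IsCompactOperator ((Pm - F * Pp * star F : E →L[ℂ] E) : E → E))
    (τ : Submodule ℂ E → ℝ)
    (hτ : ∀ K : Submodule ℂ E, τ (K.map (F : E →ₗ[ℂ] E)) = τ K) :
    (LinearMap.ker ((Pp ∘L star F ∘L Pm : E →L[ℂ] E) : E →ₗ[ℂ] E) ⊓ LinearMap.range (Pm : E →ₗ[ℂ] E)
        = (LinearMap.range ((1 - Pp : E →L[ℂ] E) : E →ₗ[ℂ] E)).map (F : E →ₗ[ℂ] E) ⊓ LinearMap.range (Pm : E →ₗ[ℂ] E)) ∧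
    (LinearMap.ker ((Pm ∘L F ∘L Pp : E →L[ℂ] E) : E →ₗ[ℂ] E) ⊓ LinearMap.range (Pp : E →ₗ[ℂ] E)
        = (LinearMap.range ((1 - Pm : E →L[ℂ] E) : E →ₗ[ℂ] E) ⊓
            (LinearMap.range (Pp : E →ₗ[ℂ] E)).map (F : E →ₗ[ℂ] E)).map
              ((star F : E →L[ℂ] E) : E →ₗ[ℂ] E)) ∧
    (τ (LinearMap.ker ((Pp ∘L star F ∘L Pm : E →L[ℂ] E) : E →ₗ[ℂ] E) ⊓ LinearMap.range (Pm : E →ₗ[ℂ] E))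
        - τ (LinearMap.ker ((Pm ∘L F ∘L Pp : E →L[ℂ] E) : E →ₗ[ℂ] E) ⊓ LinearMap.range (Pp : E →ₗ[ℂ] E))
      = τ ((LinearMap.range ((1 - Pp : E →L[ℂ] E) : E →ₗ[ℂ] E)).map (F : E →ₗ[ℂ] E) ⊓ LinearMap.range (Pm : E →ₗ[ℂ] E))
        - τ (LinearMap.range ((1 - Pm : E →L[ℂ] E) : E →ₗ[ℂ] E) ⊓ (LinearMap.range (Pp : E →ₗ[ℂ] E)).map (F : E →ₗ[ℂ] E))) := by

  -- basic consequences of unitarity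
  have hFF : ∀ x : E, (star F) (F x) = x := fun x => by
    have := congrArg (fun T : E →L[ℂ] E => T x) hF
    simpa [ContinuousLinearMap.mul_apply] using this
  have hFF' : ∀ x : E, F ((star F) x) = x := fun x => by
    have := congrArg (fun T : E →L[ℂ] E => T x) hF'
    simpa [ContinuousLinearMap.mul_apply] using this
  -- range of an idempotent
  have hmem : ∀ (T : E →L[ℂ] E), IsIdempotentElem T → ∀ x : E,
      (x ∈ LinearMap.range (T : E →ₗ[ℂ] E) ↔ T x = x) := by
    intro T hT x
    constructor
    · rintro ⟨y, rfl⟩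
      have := congrArg (fun S : E →L[ℂ] E => S y) hT
      simpa [ContinuousLinearMap.mul_apply] using this
    · intro h; exact ⟨x, h⟩
  -- range of 1 - idempotent = kernel
  have hker : ∀ (T : E →L[ℂ] E), IsIdempotentElem T → ∀ x : E,
      (x ∈ LinearMap.range ((1 - T : E →L[ℂ] E) : E →ₗ[ℂ] E) ↔ T x = 0) := by
    intro T hT x
    constructor
    · rintro ⟨y, rfl⟩
      have := congrArg (fun S : E →L[ℂ] E => S y) hT
      simp only [ContinuousLinearMap.mul_apply] at this
      simp [ContinuousLinearMap.sub_apply, ContinuousLinearMap.one_apply, map_sub, this]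
    · intro h
      exact ⟨x, by simp [ContinuousLinearMap.sub_apply, ContinuousLinearMap.one_apply, h]⟩
  have e1 : LinearMap.ker ((Pp ∘L star F ∘L Pm : E →L[ℂ] E) : E →ₗ[ℂ] E) ⊓ LinearMap.range (Pm : E →ₗ[ℂ] E)
      = (LinearMap.range ((1 - Pp : E →L[ℂ] E) : E →ₗ[ℂ] E)).map (F : E →ₗ[ℂ] E) ⊓ LinearMap.range (Pm : E →ₗ[ℂ] E) := by
    ext x
    simp only [Submodule.mem_inf, LinearMap.mem_ker, Submodule.mem_map,
      ContinuousLinearMap.coe_comp', Function.comp_apply, ContinuousLinearMap.coe_coe]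
    constructor
    · rintro ⟨hk, hr⟩
      have hx : Pm x = x := (hmem Pm hPm x).mp hr
      rw [hx] at hk
      exact ⟨⟨(star F) x, (hker Pp hPp _).mpr hk, hFF' x⟩, hr⟩
    · rintro ⟨⟨z, hz, rfl⟩, hr⟩
      have hx : Pm (F z) = F z := (hmem Pm hPm _).mp hr
      refine ⟨?_, hr⟩
      rw [hx, hFF]
      exact (hker Pp hPp z).mp hz
  have e2 : LinearMap.ker ((Pm ∘L F ∘L Pp : E →L[ℂ] E) : E →ₗ[ℂ] E) ⊓ LinearMap.range (Pp : E →ₗ[ℂ] E)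
      = (LinearMap.range ((1 - Pm : E →L[ℂ] E) : E →ₗ[ℂ] E) ⊓
          (LinearMap.range (Pp : E →ₗ[ℂ] E)).map (F : E →ₗ[ℂ] E)).map
            ((star F : E →L[ℂ] E) : E →ₗ[ℂ] E) := by
    ext x
    simp only [Submodule.mem_inf, LinearMap.mem_ker, Submodule.mem_map,
      ContinuousLinearMap.coe_comp', Function.comp_apply, ContinuousLinearMap.coe_coe]
    constructor
    · rintro ⟨hk, hr⟩
      have hx : Pp x = x := (hmem Pp hPp x).mp hr
      rw [hx] at hk
      exact ⟨F x, ⟨(hker Pm hPm _).mpr hk, ⟨x, hr, rfl⟩⟩, hFF x⟩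
    · rintro ⟨w, ⟨hw1, ⟨v, hv, rfl⟩⟩, rfl⟩
      have hv' : Pp v = v := (hmem Pp hPp v).mp hv
      rw [hFF]
      constructor
      · rw [hv']
        exact (hker Pm hPm _).mp hw1
      · exact hv
  have hτ' : ∀ K : Submodule ℂ E,
      τ (K.map ((star F : E →L[ℂ] E) : E →ₗ[ℂ] E)) = τ K := by
    intro K
    have hKm : (K.map ((star F : E →L[ℂ] E) : E →ₗ[ℂ] E)).map (F : E →ₗ[ℂ] E) = K := by
      ext x
      simp only [Submodule.mem_map, ContinuousLinearMap.coe_coe]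
      constructor
      · rintro ⟨y, ⟨z, hz, rfl⟩, rfl⟩
        rw [hFF']; exact hz
      · intro hx
        exact ⟨(star F) x, ⟨x, hx, rfl⟩, hFF' x⟩
    conv_rhs => rw [← hKm, hτ]
  refine ⟨e1, e2, ?_⟩
  rw [e1, e2, hτ']
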